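/- Let A be a linear map from R^{n×p} to a Euclidean space E, b ∈ E, λ > 0, and f : E → R strictly convex. If X̄ minimizes X ↦ f(A(X) − b) + λ‖X‖_*, then the solution set of this problem equals {X : A(X) = A(X̄) and ‖X‖_* = ‖X̄‖_*}. -/

import Mathlib

open Matrix

noncomputable def nuclearNorm {m n : Type*} [Fintype m] [Fintype n] [DecidableEq n]
    (A : Matrix m n ℝ) : ℝ :=
  ((Matrix.isHermitian_conjTranspose_mul_self A).eigenvectorUnitary.1 *
    Matrix.diagonal (Real.sqrt ∘ (Matrix.isHermitian_conjTranspose_mul_self A).eigenvalues) *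
    (star (Matrix.isHermitian_conjTranspose_mul_self A).eigenvectorUnitary : Matrix n n ℝ)).trace

noncomputable def opNorm {m n : Type*} [Fintype m] [Fintype n] [DecidableEq m] [DecidableEq n]
    (A : Matrix m n ℝ) : ℝ :=
  ‖(LinearMap.toContinuousLinearMap
      (Matrix.toEuclideanLin A : EuclideanSpace ℝ n →ₗ[ℝ] EuclideanSpace ℝ m))‖

def finner {m n : Type*} [Fintype m] [Fintype n] (A B : Matrix m n ℝ) : ℝ :=
  (Aᵀ * B).trace

noncomputable def nuclearSubdiff {m n : Type*} [Fintype m] [Fintype n] [DecidableEq n]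
    (X : Matrix m n ℝ) : Set (Matrix m n ℝ) :=
  {Y | ∀ Z, nuclearNorm X + finner Y (Z - X) ≤ nuclearNorm Z}

def rectDiag (n p : ℕ) (s : Fin p → ℝ) : Matrix (Fin n) (Fin p) ℝ :=
  Matrix.of fun i j => if (i : ℕ) = (j : ℕ) then s j else 0

def blockIR (n p r : ℕ) (R : Matrix (Fin (n - r)) (Fin (p - r)) ℝ) :
    Matrix (Fin n) (Fin p) ℝ :=
  Matrix.of fun i j =>
    if h : (i : ℕ) < r ∨ (j : ℕ) < r then (if (i : ℕ) = (j : ℕ) then 1 else 0)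
    else R ⟨i - r, by have := i.isLt; omega⟩ ⟨j - r, by have := j.isLt; omega⟩

namespace NukeProof

open Matrix

variable {m n : Type*} [Fintype m] [Fintype n] [DecidableEq n]

/-- eigenvalues of `Aᴴ * A` -/
noncomputable def dd (A : Matrix m n ℝ) : n → ℝ :=
  (Matrix.posSemidef_conjTranspose_mul_self A).1.eigenvalues

/-- eigenvector unitary of `Aᴴ * A` -/
noncomputable def VV (A : Matrix m n ℝ) : Matrix n n ℝ :=
  ((Matrix.posSemidef_conjTranspose_mul_self A).1.eigenvectorUnitary : Matrix n n ℝ)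

lemma dd_nonneg (A : Matrix m n ℝ) (j : n) : 0 ≤ dd A j :=
  (Matrix.posSemidef_conjTranspose_mul_self A).eigenvalues_nonneg j

lemma VV_star_mul_self (A : Matrix m n ℝ) : star (VV A) * VV A = 1 :=
  mem_unitaryGroup_iff'.mp
    ((Matrix.posSemidef_conjTranspose_mul_self A).1.eigenvectorUnitary).2

lemma VV_mul_star_self (A : Matrix m n ℝ) : VV A * star (VV A) = 1 :=
  mem_unitaryGroup_iff.mp
    ((Matrix.posSemidef_conjTranspose_mul_self A).1.eigenvectorUnitary).2

lemma VV_star_eq (A : Matrix m n ℝ) : star (VV A) = (VV A)ᵀ := by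
  rw [star_eq_conjTranspose]
  ext i j
  simp [Matrix.conjTranspose_apply]

lemma VV_transpose_mul_self (A : Matrix m n ℝ) : (VV A)ᵀ * VV A = 1 := by
  rw [← VV_star_eq]; exact VV_star_mul_self A

lemma VV_mul_transpose_self (A : Matrix m n ℝ) : VV A * (VV A)ᵀ = 1 := by
  rw [← VV_star_eq]; exact VV_mul_star_self A

lemma VtHV (A : Matrix m n ℝ) :
    star (VV A) * (Aᴴ * A) * VV A = diagonal (dd A) := by
  have h := Matrix.IsHermitian.conjStarAlgAut_star_eigenvectorUnitary
    (Matrix.posSemidef_conjTranspose_mul_self A).1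
  rw [Unitary.conjStarAlgAut_star_apply] at h
  simpa [VV, dd, RCLike.ofReal_real_eq_id] using h

lemma VtHV' (A : Matrix m n ℝ) :
    (VV A)ᵀ * Aᴴ * A * VV A = diagonal (dd A) := by
  calc (VV A)ᵀ * Aᴴ * A * VV A = star (VV A) * (Aᴴ * A) * VV A := by
        rw [VV_star_eq]; simp only [Matrix.mul_assoc]
    _ = diagonal (dd A) := VtHV A

lemma nuclearNorm_eq (A : Matrix m n ℝ) :
    nuclearNorm A = ∑ j, Real.sqrt (dd A j) := by
  rw [nuclearNorm, Matrix.trace_mul_cycle]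
  have h : star ((Matrix.posSemidef_conjTranspose_mul_self A).1.eigenvectorUnitary
      : Matrix n n ℝ) * ((Matrix.posSemidef_conjTranspose_mul_self A).1.eigenvectorUnitary.1) = 1 :=
    VV_star_mul_self A
  rw [h, Matrix.one_mul, Matrix.trace_diagonal]
  rfl

lemma nuclearNorm_nonneg (A : Matrix m n ℝ) : 0 ≤ nuclearNorm A := by
  rw [nuclearNorm_eq]
  exact Finset.sum_nonneg fun j _ => Real.sqrt_nonneg _

/-- Key upper bound: for any contraction `U`, `trace (Uᴴ A) ≤ ‖A‖_*`. -/
lemma trace_le_nuclear (A U : Matrix m n ℝ)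
    (hU : ∀ v : n → ℝ, (U *ᵥ v) ⬝ᵥ (U *ᵥ v) ≤ v ⬝ᵥ v) :
    (Uᴴ * A).trace ≤ nuclearNorm A := by
  have hVt : star (VV A) = (VV A)ᴴ := star_eq_conjTranspose _
  -- rewrite trace via the orthonormal columns of V
  have htr : (Uᴴ * A).trace = ((U * VV A)ᴴ * (A * VV A)).trace := by
    have e1 : (U * VV A)ᴴ * (A * VV A) = star (VV A) * (Uᴴ * A * VV A) := by
      rw [conjTranspose_mul, hVt]
      simp [Matrix.mul_assoc]
    rw [e1, ← Matrix.mul_assoc, Matrix.trace_mul_cycle, VV_mul_star_self, Matrix.one_mul]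
  have hAVc : (A * VV A)ᴴ * (A * VV A) = diagonal (dd A) := by
    rw [conjTranspose_mul, ← VtHV A, hVt]
    simp [Matrix.mul_assoc]
  have hAV : ∀ j, ∑ i, (A * VV A) i j ^ 2 = dd A j := by
    intro j
    have := congrFun (congrFun hAVc j) j
    simpa [Matrix.mul_apply, Matrix.conjTranspose_apply, sq, mul_comm] using this
  have hUV : ∀ j, ∑ i, (U * VV A) i j ^ 2 ≤ 1 := by
    intro j
    have h := hU (fun k => VV A k j)
    have e1 : (U *ᵥ fun k => VV A k j) = fun i => (U * VV A) i j := by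
      funext i; simp [Matrix.mulVec, dotProduct, Matrix.mul_apply]
    have e2 : (fun k => VV A k j) ⬝ᵥ (fun k => VV A k j) = 1 := by
      have := congrFun (congrFun (VV_transpose_mul_self A) j) j
      simpa [Matrix.mul_apply, Matrix.transpose_apply, Matrix.one_apply,
        dotProduct] using this
    rw [e1, e2] at h
    simpa [dotProduct, sq] using h
  have hjj : ∀ j, ∑ i, (U * VV A) i j * (A * VV A) i j ≤ Real.sqrt (dd A j) := by
    intro j
    calc ∑ i, (U * VV A) i j * (A * VV A) i j
        ≤ Real.sqrt (∑ i, (U * VV A) i j ^ 2) * Real.sqrt (∑ i, (A * VV A) i j ^ 2) :=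
          Real.sum_mul_le_sqrt_mul_sqrt _ _ _
      _ ≤ Real.sqrt 1 * Real.sqrt (dd A j) := by
          rw [hAV j]
          exact mul_le_mul_of_nonneg_right (Real.sqrt_le_sqrt (hUV j)) (Real.sqrt_nonneg _)
      _ = Real.sqrt (dd A j) := by rw [Real.sqrt_one, one_mul]
  have hsum : (Uᴴ * A).trace = ∑ j, ∑ i, (U * VV A) i j * (A * VV A) i j := by
    rw [htr]
    simp [Matrix.trace, Matrix.diag, Matrix.mul_apply, Matrix.conjTranspose_apply, mul_comm]
  rw [hsum, nuclearNorm_eq]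
  exact Finset.sum_le_sum fun j _ => hjj j

omit [DecidableEq n] in
lemma dot_self_mulVec (M : Matrix m n ℝ) (v : n → ℝ) :
    (M *ᵥ v) ⬝ᵥ (M *ᵥ v) = v ⬝ᵥ ((Mᵀ * M) *ᵥ v) := by
  rw [Matrix.dotProduct_mulVec (M *ᵥ v) M v, ← Matrix.mulVec_transpose,
    Matrix.mulVec_mulVec, dotProduct_comm]

/-- Attainment of the dual bound. -/
lemma exists_dual (A : Matrix m n ℝ) :
    ∃ U : Matrix m n ℝ, (∀ v : n → ℝ, (U *ᵥ v) ⬝ᵥ (U *ᵥ v) ≤ v ⬝ᵥ v) ∧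
      (Uᴴ * A).trace = nuclearNorm A := by
  classical
  set g : n → ℝ := fun j => if dd A j = 0 then 0 else (Real.sqrt (dd A j))⁻¹ with hg
  set U : Matrix m n ℝ := A * VV A * diagonal g * (VV A)ᵀ with hUdef
  have hUH : Uᴴ = VV A * diagonal g * (VV A)ᵀ * Aᴴ := by
    rw [hUdef]
    have h1 : ((VV A)ᵀ)ᴴ = VV A := by ext i j; simp [Matrix.conjTranspose_apply]
    have h2 : (VV A)ᴴ = (VV A)ᵀ := by ext i j; simp [Matrix.conjTranspose_apply]
    have h3 : (diagonal g)ᴴ = diagonal g := by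
      simp [diagonal_conjTranspose]
    simp only [conjTranspose_mul, h1, h2, h3]
    try simp only [Matrix.mul_assoc]
  have hDg : diagonal g * diagonal (dd A) * diagonal g
      = diagonal (fun j => g j * (dd A j * g j)) := by
    rw [diagonal_mul_diagonal, diagonal_mul_diagonal]
    exact congrArg diagonal (funext fun j => by ring)
  have key : (VV A)ᵀ * Aᴴ * (A * VV A) = diagonal (dd A) := by
    calc (VV A)ᵀ * Aᴴ * (A * VV A) = (VV A)ᵀ * Aᴴ * A * VV A := by
          simp only [Matrix.mul_assoc]
      _ = diagonal (dd A) := VtHV' A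
  have hUHU : Uᵀ * U = VV A * diagonal (fun j => g j * (dd A j * g j)) * (VV A)ᵀ := by
    have hUt : Uᵀ = Uᴴ := by ext i j; simp [Matrix.conjTranspose_apply]
    rw [hUt, hUH, hUdef, ← hDg]
    calc VV A * diagonal g * (VV A)ᵀ * Aᴴ * (A * VV A * diagonal g * (VV A)ᵀ)
        = VV A * diagonal g * ((VV A)ᵀ * Aᴴ * (A * VV A)) * (diagonal g * (VV A)ᵀ) := by
          simp only [Matrix.mul_assoc]
      _ = VV A * diagonal g * diagonal (dd A) * (diagonal g * (VV A)ᵀ) := by rw [key]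
      _ = VV A * (diagonal g * diagonal (dd A) * diagonal g) * (VV A)ᵀ := by
          simp only [Matrix.mul_assoc]
  have he01 : ∀ j, g j * (dd A j * g j) ≤ 1 := by
    intro j
    by_cases h : dd A j = 0
    · simp [hg, h]
    · have hs : Real.sqrt (dd A j) * Real.sqrt (dd A j) = dd A j :=
        Real.mul_self_sqrt (dd_nonneg A j)
      have hpos : 0 < dd A j := lt_of_le_of_ne (dd_nonneg A j) (Ne.symm h)
      have hsne : Real.sqrt (dd A j) ≠ 0 := by positivity
      simp only [hg, if_neg h]
      rw [show (Real.sqrt (dd A j))⁻¹ * (dd A j * (Real.sqrt (dd A j))⁻¹)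
        = dd A j / (Real.sqrt (dd A j) * Real.sqrt (dd A j)) by field_simp, hs,
        div_self h]
  refine ⟨U, ?_, ?_⟩
  · intro v
    have hUt : Uᴴ = Uᵀ := by ext i j; simp [Matrix.conjTranspose_apply]
    rw [dot_self_mulVec, hUHU]
    set w : n → ℝ := (VV A)ᵀ *ᵥ v with hw
    have hsplit : v ⬝ᵥ ((VV A * diagonal (fun j => g j * (dd A j * g j)) * (VV A)ᵀ) *ᵥ v)
        = w ⬝ᵥ (diagonal (fun j => g j * (dd A j * g j)) *ᵥ w) := by
      rw [← Matrix.mulVec_mulVec, ← Matrix.mulVec_mulVec,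
        Matrix.dotProduct_mulVec v (VV A) _]
      try rw [← Matrix.mulVec_transpose]
    rw [hsplit]
    have hww : w ⬝ᵥ w = v ⬝ᵥ v := by
      rw [hw, dot_self_mulVec]
      have : ((VV A)ᵀ)ᵀ * (VV A)ᵀ = 1 := by
        rw [Matrix.transpose_transpose]
        exact VV_mul_transpose_self A
      rw [this]
      simp
    calc w ⬝ᵥ (diagonal (fun j => g j * (dd A j * g j)) *ᵥ w)
        = ∑ j, (g j * (dd A j * g j)) * (w j * w j) := by
          simp only [dotProduct, Matrix.mulVec_diagonal]
          exact Finset.sum_congr rfl fun j _ => by ring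
      _ ≤ ∑ j, w j * w j := by
          refine Finset.sum_le_sum fun j _ => ?_
          nlinarith [he01 j, mul_self_nonneg (w j)]
      _ = w ⬝ᵥ w := by simp [dotProduct]
      _ = v ⬝ᵥ v := hww
  · -- trace (Uᴴ A) = ∑ √(d j)
    have e0 : Uᴴ * A = VV A * diagonal g * ((VV A)ᵀ * Aᴴ * A) := by
      rw [hUH]; simp only [Matrix.mul_assoc]
    rw [e0, Matrix.trace_mul_cycle]
    have e1 : (VV A)ᵀ * Aᴴ * A * VV A * diagonal g = diagonal (fun j => dd A j * g j) := by
      rw [VtHV' A, diagonal_mul_diagonal]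
    rw [e1, Matrix.trace_diagonal, nuclearNorm_eq]
    refine Finset.sum_congr rfl fun j _ => ?_
    by_cases h : dd A j = 0
    · simp [hg, h]
    · have hs : Real.sqrt (dd A j) * Real.sqrt (dd A j) = dd A j :=
        Real.mul_self_sqrt (dd_nonneg A j)
      have hsne : Real.sqrt (dd A j) ≠ 0 := by
        intro hc
        rw [hc, mul_zero] at hs; exact h hs.symm
      simp only [hg, if_neg h]
      rw [mul_inv_eq_iff_eq_mul₀ hsne]
      exact hs.symm
lemma nuclear_midpoint (X Y : Matrix m n ℝ) :
    nuclearNorm ((1/2 : ℝ) • (X + Y)) ≤ (nuclearNorm X + nuclearNorm Y) / 2 := by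
  obtain ⟨U, hU, hEq⟩ := exists_dual ((1/2 : ℝ) • (X + Y))
  rw [← hEq]
  have e : Uᴴ * ((1/2 : ℝ) • (X + Y)) = (1/2 : ℝ) • (Uᴴ * X + Uᴴ * Y) := by
    rw [Matrix.mul_smul, Matrix.mul_add]
  rw [e, Matrix.trace_smul, Matrix.trace_add]
  have h1 := trace_le_nuclear X U hU
  have h2 := trace_le_nuclear Y U hU
  simp only [smul_eq_mul]
  linarith

end NukeProof

theorem regularized_solution_set_eq {n p : ℕ} {E : Type*}
    [NormedAddCommGroup E] [InnerProductSpace ℝ E] [FiniteDimensional ℝ E]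
    (A : Matrix (Fin n) (Fin p) ℝ →ₗ[ℝ] E) (b : E) (lam : ℝ) (hlam : 0 < lam)
    (f : E → ℝ) (hf : StrictConvexOn ℝ Set.univ f)
    (Xb : Matrix (Fin n) (Fin p) ℝ)
    (hmin : ∀ X, f (A Xb - b) + lam * nuclearNorm Xb ≤ f (A X - b) + lam * nuclearNorm X) :
    {X : Matrix (Fin n) (Fin p) ℝ |
        ∀ Y, f (A X - b) + lam * nuclearNorm X ≤ f (A Y - b) + lam * nuclearNorm Y}
      = {X | A X = A Xb ∧ nuclearNorm X = nuclearNorm Xb} := by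
  ext X
  simp only [Set.mem_setOf_eq]
  constructor
  · intro h
    have hobj : f (A X - b) + lam * nuclearNorm X = f (A Xb - b) + lam * nuclearNorm Xb :=
      le_antisymm (h Xb) (hmin X)
    have hAX : A X = A Xb := by
      by_contra hne
      set M : Matrix (Fin n) (Fin p) ℝ := (1/2 : ℝ) • (X + Xb) with hM
      have hAM : A M - b = (1/2 : ℝ) • (A X - b) + (1/2 : ℝ) • (A Xb - b) := by
        rw [hM, _root_.map_smul, map_add]
        module
      have hne' : A X - b ≠ A Xb - b := fun hc => hne (by
        have := congrArg (· + b) hc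
        simpa using this)
      have hstrict : f (A M - b) < (1/2 : ℝ) * f (A X - b) + (1/2 : ℝ) * f (A Xb - b) := by
        have := hf.2 (Set.mem_univ (A X - b)) (Set.mem_univ (A Xb - b)) hne'
          (by norm_num : (0:ℝ) < 1/2) (by norm_num : (0:ℝ) < 1/2) (by norm_num)
        rw [hAM]
        simpa [smul_eq_mul] using this
      have hnuc : nuclearNorm M ≤ (nuclearNorm X + nuclearNorm Xb) / 2 :=
        NukeProof.nuclear_midpoint X Xb
      have hmm := hmin M
      have hlnuc : lam * nuclearNorm M ≤ lam * ((nuclearNorm X + nuclearNorm Xb) / 2) :=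
        mul_le_mul_of_nonneg_left hnuc hlam.le
      nlinarith [hmm, hstrict, hlnuc, hobj]
    have hN : nuclearNorm X = nuclearNorm Xb := by
      have hfe : f (A X - b) = f (A Xb - b) := by rw [hAX]
      have : lam * nuclearNorm X = lam * nuclearNorm Xb := by linarith
      exact mul_left_cancel₀ (ne_of_gt hlam) this
    exact ⟨hAX, hN⟩
  · rintro ⟨h1, h2⟩ Y
    rw [h1, h2]
    exact hmin Y
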